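/- arXiv:1303.4382 — 2 statements merged into one kernel-verified Lean document; each statement's English description precedes it below -/
import Mathlib

section
/- N-Talagrand inequality: Assume the metric measure space (X,d,m) satisfies CD^e(K,N) with K > 0 and that m ∈ P₂(X,d) (m is a probability measure with finite second moment). Then for every μ ∈ P₂(X,d,m): W₂(μ,m) ≤ (π/2)·√(N/K), and Ent(μ) ≥ −N·log cos(√(K/N)·W₂(μ,m)). -/
open MeasureTheory Filter Set ENNReal

noncomputable section
open scoped Classical
/-- The function `𝔰_κ(θ)`. -/
def sK (κ θ : ℝ) : ℝ :=
  if 0 < κ then Real.sin (Real.sqrt κ * θ) / Real.sqrt κ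
  else if κ = 0 then θ
  else Real.sinh (Real.sqrt (-κ) * θ) / Real.sqrt (-κ)

/-- The function `𝔠_κ(θ)`. -/
def cK (κ θ : ℝ) : ℝ :=
  if 0 ≤ κ then Real.cos (Real.sqrt κ * θ)
  else Real.cosh (Real.sqrt (-κ) * θ)

/-- The distortion coefficient `σ_κ^{(t)}(θ)`, valued in `[0,∞]`. -/
def sigmaK (κ t θ : ℝ) : ℝ≥0∞ :=
  if κ * θ ^ 2 = 0 then ENNReal.ofReal t
  else if κ * θ ^ 2 < Real.pi ^ 2 then ENNReal.ofReal (sK κ (t * θ) / sK κ θ)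
  else ⊤

/-- `e_κ(t) = ∫₀ᵗ e^{κ s} ds`. -/
def eInt (κ t : ℝ) : ℝ := ∫ s in (0:ℝ)..t, Real.exp (κ * s)

section MetricPart

variable {X : Type*} [MetricSpace X]

/-- A constant-speed geodesic parametrized on `[0,1]`. -/
def IsUnitGeodesic (γ : ℝ → X) : Prop :=
  ∀ s ∈ Set.Icc (0:ℝ) 1, ∀ t ∈ Set.Icc (0:ℝ) 1,
    dist (γ s) (γ t) = |s - t| * dist (γ 0) (γ 1)

/-- A metric space is geodesic if every pair of points is joined by a
constant-speed geodesic. -/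
def GeodesicSpace (Y : Type*) [MetricSpace Y] : Prop :=
  ∀ x y : Y, ∃ γ : ℝ → Y, IsUnitGeodesic γ ∧ γ 0 = x ∧ γ 1 = y

/-- `U_N(x) = exp(-S(x)/N)` for a functional `S : X → (-∞,∞]`. -/
def UNof (N : ℝ) (S : X → EReal) (x : X) : ℝ :=
  if S x = ⊤ then 0 else Real.exp (-(S x).toReal / N)

/-- The `(K,N)`-convexity inequality along a given geodesic. -/
def KNConvexAlong (K N : ℝ) (S : X → EReal) (γ : ℝ → X) : Prop :=
  ∀ t ∈ Set.Icc (0:ℝ) 1,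
    sigmaK (K / N) (1 - t) (dist (γ 0) (γ 1)) * ENNReal.ofReal (UNof N S (γ 0)) +
      sigmaK (K / N) t (dist (γ 0) (γ 1)) * ENNReal.ofReal (UNof N S (γ 1)) ≤
    ENNReal.ofReal (UNof N S (γ t))

/-- `(K,N)`-convexity of a functional. -/
def KNConvex (K N : ℝ) (S : X → EReal) : Prop :=
  ∀ x₀ x₁ : X, S x₀ ≠ ⊤ → S x₁ ≠ ⊤ →
    ∃ γ : ℝ → X, IsUnitGeodesic γ ∧ γ 0 = x₀ ∧ γ 1 = x₁ ∧ KNConvexAlong K N S γ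

/-- Strong `(K,N)`-convexity: the inequality holds along every geodesic contained in
the proper domain of `S`. -/
def StronglyKNConvex (K N : ℝ) (S : X → EReal) : Prop :=
  ∀ γ : ℝ → X, IsUnitGeodesic γ → (∀ t ∈ Set.Icc (0:ℝ) 1, S (γ t) ≠ ⊤) →
    KNConvexAlong K N S γ

/-- Local absolute continuity of a curve on a set of times. -/
def LocACOn (x : ℝ → X) (I : Set ℝ) : Prop :=
  ∀ a b : ℝ, a ∈ I → b ∈ I → a ≤ b →
    ∃ g : ℝ → ℝ, IntegrableOn g (Set.Icc a b) ∧
      ∀ s t : ℝ, a ≤ s → s ≤ t → t ≤ b → dist (x s) (x t) ≤ ∫ r in Set.Icc s t, g r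

/-- The `EVI_{K,N}` differential inequality against an observer point `z`,
required at almost every positive time. -/
def EVIineq (K N : ℝ) (S : X → EReal) (x : ℝ → X) (z : X) : Prop :=
  ∀ᵐ t ∂(volume.restrict (Set.Ioi (0:ℝ))),
    ∃ D : ℝ, HasDerivAt (fun r : ℝ => sK (K / N) (dist (x r) z / 2) ^ 2) D t ∧
      D + K * sK (K / N) (dist (x t) z / 2) ^ 2 ≤
        N / 2 * (1 - UNof N S z / UNof N S (x t))

/-- `EVI_{K,N}` gradient flow of `S` starting in `x₀`. -/
def IsEVIFlow (K N : ℝ) (S : X → EReal) (x₀ : X) (x : ℝ → X) : Prop :=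
  x 0 = x₀ ∧ (∀ t : ℝ, 0 < t → S (x t) ≠ ⊤) ∧ LocACOn x (Set.Ioi 0) ∧
    Tendsto x (nhdsWithin 0 (Set.Ioi 0)) (nhds x₀) ∧
    ∀ z : X, S z ≠ ⊤ → EVIineq K N S x z

/-- The dimensional error term `(N/K)(1-e^{-K(s+t)})·(√t-√s)²/(2(s+t))`, with the
conventions `N(s+t)` for the prefactor when `K = 0` and value `0` when `s = t = 0`. -/
def eviErr (K N s t : ℝ) : ℝ :=
  if s = 0 ∧ t = 0 then 0
  else (if K = 0 then N * (s + t) else N / K * (1 - Real.exp (-K * (s + t)))) *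
    ((Real.sqrt t - Real.sqrt s) ^ 2 / (2 * (s + t)))

end MetricPart
section MeasurePart

variable {X : Type*} [MetricSpace X] [MeasurableSpace X]

/-- A probability measure has finite second moment. -/
def FiniteSecondMoment (μ : Measure X) : Prop :=
  ∃ x₀ : X, ∫⁻ x, ENNReal.ofReal (dist x₀ x ^ 2) ∂μ < ⊤

/-- `q` is a coupling of `μ` and `ν`. -/
def IsCoupling (μ ν : Measure X) (q : Measure (X × X)) : Prop :=
  q.map Prod.fst = μ ∧ q.map Prod.snd = ν

/-- The squared `L²`-Wasserstein distance. -/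
def W2sq (μ ν : Measure X) : ℝ≥0∞ :=
  ⨅ (q : Measure (X × X)) (_ : IsCoupling μ ν q),
    ∫⁻ p, ENNReal.ofReal (dist p.1 p.2 ^ 2) ∂q

/-- The `L²`-Wasserstein distance. -/
def W2 (μ ν : Measure X) : ℝ := Real.sqrt (W2sq μ ν).toReal

/-- The pointwise entropy density `ρ log ρ` of `μ` w.r.t. `m`. -/
def entDens (m μ : Measure X) (x : X) : ℝ :=
  (μ.rnDeriv m x).toReal * Real.log (μ.rnDeriv m x).toReal

/-- The relative entropy `Ent(μ | m) ∈ [-∞, +∞]`: it equals `∫ ρ log ρ dm` if `μ = ρ m`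
is absolutely continuous with `(ρ log ρ)₊` integrable, and `+∞` otherwise. -/
def Ent (m μ : Measure X) : EReal :=
  if μ ≪ m ∧ (∫⁻ x, ENNReal.ofReal (entDens m μ x) ∂m) < ⊤ then
    ((∫⁻ x, ENNReal.ofReal (entDens m μ x) ∂m : ℝ≥0∞) : EReal)
      - ((∫⁻ x, ENNReal.ofReal (-entDens m μ x) ∂m : ℝ≥0∞) : EReal)
  else ⊤

/-- `U_N(μ) = exp(-Ent(μ|m)/N)`, valued in `[0,∞]`. -/
def UNe (N : ℝ) (m μ : Measure X) : ℝ≥0∞ :=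
  if Ent m μ = ⊤ then 0
  else if Ent m μ = ⊥ then ⊤
  else ENNReal.ofReal (Real.exp (-(Ent m μ).toReal / N))

/-- Membership in `P₂(X,d)`. -/
def MemP2 (μ : Measure X) : Prop := IsProbabilityMeasure μ ∧ FiniteSecondMoment μ

/-- Membership in `P₂(X,d,m)`. -/
def MemP2ac (m μ : Measure X) : Prop := MemP2 μ ∧ μ ≪ m

/-- Membership in `P₂*(X,d,m)`: absolutely continuous with finite entropy. -/
def MemP2star (m μ : Measure X) : Prop := MemP2ac m μ ∧ Ent m μ ≠ ⊤ ∧ Ent m μ ≠ ⊥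

/-- Membership in `P_∞(X,d,m)`: absolutely continuous with bounded support. -/
def MemPinf (m μ : Measure X) : Prop :=
  MemP2ac m μ ∧ ∃ B : Set X, Bornology.IsBounded B ∧ μ Bᶜ = 0

/-- A constant-speed geodesic in the Wasserstein space, parametrized on `[0,1]`. -/
def IsW2Geodesic (μ : ℝ → Measure X) : Prop :=
  ∀ s ∈ Set.Icc (0:ℝ) 1, ∀ t ∈ Set.Icc (0:ℝ) 1,
    W2 (μ s) (μ t) = |s - t| * W2 (μ 0) (μ 1)

/-- The `CD^e(K,N)` entropy-convexity inequality at time `t` along a curve of measures. -/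
def CDeIneqAt (K N : ℝ) (m : Measure X) (μ : ℝ → Measure X) (t : ℝ) : Prop :=
  sigmaK (K / N) (1 - t) (W2 (μ 0) (μ 1)) * UNe N m (μ 0) +
    sigmaK (K / N) t (W2 (μ 0) (μ 1)) * UNe N m (μ 1) ≤ UNe N m (μ t)

/-- The entropic curvature-dimension condition `CD^e(K,N)`. -/
def CDe (K N : ℝ) (m : Measure X) : Prop :=
  ∀ μ₀ μ₁ : Measure X, MemP2star m μ₀ → MemP2star m μ₁ →
    ∃ μ : ℝ → Measure X, μ 0 = μ₀ ∧ μ 1 = μ₁ ∧ IsW2Geodesic μ ∧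
      (∀ t ∈ Set.Icc (0:ℝ) 1, MemP2star m (μ t)) ∧
      ∀ t ∈ Set.Icc (0:ℝ) 1, CDeIneqAt K N m μ t

/-- The strong entropic curvature-dimension condition: the `CD^e` inequality holds
along every Wasserstein geodesic in `P₂*(X,d,m)`. -/
def StrongCDe (K N : ℝ) (m : Measure X) : Prop :=
  ∀ μ : ℝ → Measure X, IsW2Geodesic μ → (∀ t ∈ Set.Icc (0:ℝ) 1, MemP2star m (μ t)) →
    ∀ t ∈ Set.Icc (0:ℝ) 1, CDeIneqAt K N m μ t

/-- The support of a measure. -/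
def measSupp (m : Measure X) : Set X := {x | ∀ U ∈ nhds x, m U ≠ 0}

end MeasurePart

section EntropyHelpers
set_option linter.unusedSectionVars false

variable {X : Type*} [MetricSpace X] [MeasurableSpace X] {m μ ν : Measure X}

lemma xlogx_ge {x : ℝ} (hx : 0 ≤ x) : x - 1 ≤ x * Real.log x := by
  rcases eq_or_lt_of_le hx with h | h
  · simp [← h]
  · have h1 := Real.log_le_sub_one_of_pos (show (0:ℝ) < x⁻¹ by positivity)
    rw [Real.log_inv] at h1
    have := mul_le_mul_of_nonneg_left h1 h.le
    rw [mul_sub, mul_inv_cancel₀ h.ne'] at this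
    nlinarith

lemma entDens_meas (m μ : Measure X) : Measurable (entDens m μ) :=
  (Measure.measurable_rnDeriv μ m).ennreal_toReal.mul
    (Real.measurable_log.comp (Measure.measurable_rnDeriv μ m).ennreal_toReal)

lemma entDens_ge (m μ : Measure X) (x : X) :
    (μ.rnDeriv m x).toReal - 1 ≤ entDens m μ x :=
  xlogx_ge ENNReal.toReal_nonneg

lemma neg_entDens_le_one (m μ : Measure X) (x : X) : -entDens m μ x ≤ 1 := by
  have h := entDens_ge m μ x
  have := ENNReal.toReal_nonneg (a := μ.rnDeriv m x)
  linarith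

lemma lint_neg_entDens_le (m μ : Measure X) :
    (∫⁻ x, ENNReal.ofReal (-entDens m μ x) ∂m) ≤ m Set.univ := by
  calc (∫⁻ x, ENNReal.ofReal (-entDens m μ x) ∂m) ≤ ∫⁻ _, 1 ∂m :=
        lintegral_mono fun x => ENNReal.ofReal_le_one.mpr (neg_entDens_le_one m μ x)
    _ = m Set.univ := lintegral_one

lemma ereal_coe_of_ne_top {x : ℝ≥0∞} (hx : x ≠ ⊤) :
    (x : EReal) = ((x.toReal : ℝ) : EReal) := by
  induction x using ENNReal.recTopCoe with
  | top => exact absurd rfl hx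
  | coe y => rw [EReal.coe_nnreal_eq_coe_real, ENNReal.coe_toReal]

lemma ent_repr [IsFiniteMeasure m] (hac : μ ≪ m)
    (hA : (∫⁻ x, ENNReal.ofReal (entDens m μ x) ∂m) < ⊤) :
    Integrable (entDens m μ) m ∧ Ent m μ = ((∫ x, entDens m μ x ∂m : ℝ) : EReal) := by
  have hfm := entDens_meas m μ
  have hB : (∫⁻ x, ENNReal.ofReal (-entDens m μ x) ∂m) < ⊤ :=
    lt_of_le_of_lt (lint_neg_entDens_le m μ) (measure_lt_top m _)
  have hint : Integrable (entDens m μ) m := by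
    refine ⟨hfm.aestronglyMeasurable, ?_⟩
    rw [hasFiniteIntegral_iff_norm]
    calc (∫⁻ x, ENNReal.ofReal ‖entDens m μ x‖ ∂m)
        ≤ ∫⁻ x, (ENNReal.ofReal (entDens m μ x) + ENNReal.ofReal (-entDens m μ x)) ∂m := by
          refine lintegral_mono fun x => ?_
          rcases le_total 0 (entDens m μ x) with h | h
          · rw [Real.norm_eq_abs, abs_of_nonneg h]; exact le_add_right le_rfl
          · rw [Real.norm_eq_abs, abs_of_nonpos h]; exact le_add_left le_rfl
      _ = (∫⁻ x, ENNReal.ofReal (entDens m μ x) ∂m) +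
            ∫⁻ x, ENNReal.ofReal (-entDens m μ x) ∂m :=
          lintegral_add_left hfm.ennreal_ofReal _
      _ < ⊤ := ENNReal.add_lt_top.mpr ⟨hA, hB⟩
  have key := integral_eq_lintegral_pos_part_sub_lintegral_neg_part hint
  refine ⟨hint, ?_⟩
  unfold Ent
  rw [if_pos ⟨hac, hA⟩, ereal_coe_of_ne_top hA.ne, ereal_coe_of_ne_top hB.ne,
    ← EReal.coe_sub, key]

lemma ent_ne_bot [IsFiniteMeasure m] : Ent m μ ≠ ⊥ := by
  unfold Ent
  split_ifs with h
  · have hB : (∫⁻ x, ENNReal.ofReal (-entDens m μ x) ∂m) ≠ ⊤ :=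
      (lt_of_le_of_lt (lint_neg_entDens_le m μ) (measure_lt_top m _)).ne
    rw [ereal_coe_of_ne_top h.2.ne, ereal_coe_of_ne_top hB, ← EReal.coe_sub]
    exact EReal.coe_ne_bot _
  · simp

lemma ent_nonneg [IsProbabilityMeasure m] [IsProbabilityMeasure μ] (hac : μ ≪ m) :
    (0 : EReal) ≤ Ent m μ := by
  by_cases hA : (∫⁻ x, ENNReal.ofReal (entDens m μ x) ∂m) < ⊤
  · obtain ⟨hint, hrepr⟩ := ent_repr hac hA
    rw [hrepr]
    have h1 : Integrable (fun x => (μ.rnDeriv m x).toReal - 1) m :=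
      (Measure.integrable_toReal_rnDeriv).sub (integrable_const 1)
    have h2 : (∫ x, ((μ.rnDeriv m x).toReal - 1) ∂m) = 0 := by
      rw [integral_sub Measure.integrable_toReal_rnDeriv (integrable_const 1),
        Measure.integral_toReal_rnDeriv hac]
      simp
    have h3 : (0:ℝ) ≤ ∫ x, entDens m μ x ∂m := by
      rw [← h2]
      exact integral_mono h1 hint fun x => entDens_ge m μ x
    exact_mod_cast h3
  · unfold Ent; rw [if_neg fun h => hA h.2]; exact le_top

lemma ent_self [IsProbabilityMeasure m] : Ent m m = 0 := by
  have h0 : entDens m m =ᵐ[m] fun _ => (0:ℝ) :=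
    (Measure.rnDeriv_self m).mono fun x hx => by unfold entDens; rw [hx]; simp
  have hA : (∫⁻ x, ENNReal.ofReal (entDens m m x) ∂m) = 0 := by
    have he : (fun x => ENNReal.ofReal (entDens m m x)) =ᵐ[m] (fun _ => (0:ℝ≥0∞)) :=
      h0.mono fun x hx => by simp [hx]
    rw [lintegral_congr_ae he, lintegral_zero]
  have hB : (∫⁻ x, ENNReal.ofReal (-entDens m m x) ∂m) = 0 := by
    have he : (fun x => ENNReal.ofReal (-entDens m m x)) =ᵐ[m] (fun _ => (0:ℝ≥0∞)) :=
      h0.mono fun x hx => by simp [hx]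
    rw [lintegral_congr_ae he, lintegral_zero]
  unfold Ent
  rw [if_pos ⟨Measure.AbsolutelyContinuous.rfl, by rw [hA]; exact ENNReal.zero_lt_top⟩, hA, hB]
  simp

lemma une_eq {r : ℝ} (h : Ent m ν = (r : EReal)) (N : ℝ) :
    UNe N m ν = ENNReal.ofReal (Real.exp (-r / N)) := by
  unfold UNe
  rw [h, if_neg (by simp), if_neg (by simp)]
  norm_num [EReal.toReal_coe]

lemma une_le_one [IsProbabilityMeasure m] [IsProbabilityMeasure ν] (hac : ν ≪ m)
    (N : ℝ) (hN : 0 < N) : UNe N m ν ≤ 1 := by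
  by_cases htop : Ent m ν = ⊤
  · unfold UNe; rw [if_pos htop]; exact zero_le_one
  · have hbot : Ent m ν ≠ ⊥ := ent_ne_bot
    have hcoe : ((Ent m ν).toReal : EReal) = Ent m ν := EReal.coe_toReal htop hbot
    have hr : (0:ℝ) ≤ (Ent m ν).toReal := by
      have h0 := ent_nonneg hac
      rw [← hcoe] at h0
      exact_mod_cast h0
    rw [une_eq hcoe.symm N]
    rw [ENNReal.ofReal_le_one, Real.exp_le_one_iff]
    have : 0 ≤ (Ent m ν).toReal / N := div_nonneg hr hN.le
    rw [neg_div]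
    linarith

end EntropyHelpers
section W2Helpers
set_option linter.unusedSectionVars false

variable {X : Type*} [MetricSpace X] [MeasurableSpace X] {m μ ν : Measure X}

lemma sq_dist_le (y a b : X) : dist a b ^ 2 ≤ 2 * dist y a ^ 2 + 2 * dist y b ^ 2 := by
  have h1 := dist_triangle a y b
  have h2 : dist a y = dist y a := dist_comm a y
  have h3 := dist_nonneg (x := y) (y := a)
  have h4 := dist_nonneg (x := y) (y := b)
  nlinarith [dist_nonneg (x := a) (y := b), sq_nonneg (dist y a - dist y b)]

lemma fsm_at [IsFiniteMeasure ν] (h : FiniteSecondMoment ν) (y : X) :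
    (∫⁻ x, ENNReal.ofReal (dist y x ^ 2) ∂ν) < ⊤ := by
  obtain ⟨x₀, hx₀⟩ := h
  calc (∫⁻ x, ENNReal.ofReal (dist y x ^ 2) ∂ν)
      ≤ ∫⁻ x, (ENNReal.ofReal (2 * dist x₀ y ^ 2) +
          2 * ENNReal.ofReal (dist x₀ x ^ 2)) ∂ν := by
        refine lintegral_mono fun x => ?_
        calc ENNReal.ofReal (dist y x ^ 2)
            ≤ ENNReal.ofReal (2 * dist x₀ y ^ 2 + 2 * dist x₀ x ^ 2) :=
              ENNReal.ofReal_le_ofReal (sq_dist_le x₀ y x)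
          _ ≤ ENNReal.ofReal (2 * dist x₀ y ^ 2) + ENNReal.ofReal (2 * dist x₀ x ^ 2) :=
              ENNReal.ofReal_add_le
          _ ≤ ENNReal.ofReal (2 * dist x₀ y ^ 2) + 2 * ENNReal.ofReal (dist x₀ x ^ 2) := by
              gcongr
              rw [ENNReal.ofReal_mul (by norm_num : (0:ℝ) ≤ 2)]
              gcongr
              norm_num
    _ = ENNReal.ofReal (2 * dist x₀ y ^ 2) * ν Set.univ +
          2 * ∫⁻ x, ENNReal.ofReal (dist x₀ x ^ 2) ∂ν := by
        rw [lintegral_add_left measurable_const, lintegral_const,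
          lintegral_const_mul' _ _ (by norm_num : (2:ℝ≥0∞) ≠ ⊤)]
    _ < ⊤ := by
        refine ENNReal.add_lt_top.mpr ⟨?_, ?_⟩
        · exact ENNReal.mul_lt_top ENNReal.ofReal_lt_top (measure_lt_top ν _)
        · exact ENNReal.mul_lt_top (by norm_num) hx₀

lemma cost_prod_le [OpensMeasurableSpace X] (ν₁ ν₂ : Measure X) [SFinite ν₁] [SFinite ν₂]
    (y : X) :
    (∫⁻ p, ENNReal.ofReal (dist p.1 p.2 ^ 2) ∂(ν₁.prod ν₂)) ≤
      2 * (ν₂ Set.univ * ∫⁻ x, ENNReal.ofReal (dist y x ^ 2) ∂ν₁) +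
      2 * (ν₁ Set.univ * ∫⁻ x, ENNReal.ofReal (dist y x ^ 2) ∂ν₂) := by
  have hgm : Measurable fun x : X => ENNReal.ofReal (dist y x ^ 2) :=
    ((continuous_const.dist continuous_id).pow 2).measurable.ennreal_ofReal
  calc (∫⁻ p, ENNReal.ofReal (dist p.1 p.2 ^ 2) ∂(ν₁.prod ν₂))
      ≤ ∫⁻ p : X × X, (2 * ENNReal.ofReal (dist y p.1 ^ 2) +
          2 * ENNReal.ofReal (dist y p.2 ^ 2)) ∂(ν₁.prod ν₂) := by
        refine lintegral_mono fun p => ?_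
        calc ENNReal.ofReal (dist p.1 p.2 ^ 2)
            ≤ ENNReal.ofReal (2 * dist y p.1 ^ 2 + 2 * dist y p.2 ^ 2) :=
              ENNReal.ofReal_le_ofReal (sq_dist_le y p.1 p.2)
          _ = ENNReal.ofReal (2 * dist y p.1 ^ 2) + ENNReal.ofReal (2 * dist y p.2 ^ 2) :=
              ENNReal.ofReal_add (by positivity) (by positivity)
          _ = 2 * ENNReal.ofReal (dist y p.1 ^ 2) + 2 * ENNReal.ofReal (dist y p.2 ^ 2) := by
              rw [ENNReal.ofReal_mul (by norm_num : (0:ℝ) ≤ 2),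
                ENNReal.ofReal_mul (by norm_num : (0:ℝ) ≤ 2)]
              norm_num
    _ = (∫⁻ p : X × X, 2 * ENNReal.ofReal (dist y p.1 ^ 2) ∂(ν₁.prod ν₂)) +
          ∫⁻ p : X × X, 2 * ENNReal.ofReal (dist y p.2 ^ 2) ∂(ν₁.prod ν₂) :=
        lintegral_add_left (((hgm.comp measurable_fst)).const_mul 2) _
    _ = 2 * (ν₂ Set.univ * ∫⁻ x, ENNReal.ofReal (dist y x ^ 2) ∂ν₁) +
          2 * (ν₁ Set.univ * ∫⁻ x, ENNReal.ofReal (dist y x ^ 2) ∂ν₂) := by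
        rw [lintegral_const_mul' _ _ (by norm_num : (2:ℝ≥0∞) ≠ ⊤),
          lintegral_const_mul' _ _ (by norm_num : (2:ℝ≥0∞) ≠ ⊤)]
        congr 1
        · congr 1
          have : (∫⁻ p : X × X, ENNReal.ofReal (dist y p.1 ^ 2) ∂(ν₁.prod ν₂)) =
              ∫⁻ x, ENNReal.ofReal (dist y x ^ 2) ∂((ν₁.prod ν₂).map Prod.fst) :=
            (lintegral_map hgm measurable_fst).symm
          rw [this, Measure.map_fst_prod, lintegral_smul_measure, smul_eq_mul]
        · congr 1
          have : (∫⁻ p : X × X, ENNReal.ofReal (dist y p.2 ^ 2) ∂(ν₁.prod ν₂)) =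
              ∫⁻ x, ENNReal.ofReal (dist y x ^ 2) ∂((ν₁.prod ν₂).map Prod.snd) :=
            (lintegral_map hgm measurable_snd).symm
          rw [this, Measure.map_snd_prod, lintegral_smul_measure, smul_eq_mul]

lemma w2sq_le_cost {q : Measure (X × X)} (hq : IsCoupling μ ν q) :
    W2sq μ ν ≤ ∫⁻ p, ENNReal.ofReal (dist p.1 p.2 ^ 2) ∂q :=
  iInf_le_of_le q (iInf_le _ hq)

lemma isCoupling_prod [IsProbabilityMeasure μ] [IsProbabilityMeasure ν] :
    IsCoupling μ ν (μ.prod ν) := by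
  constructor
  · rw [Measure.map_fst_prod, measure_univ, one_smul]
  · rw [Measure.map_snd_prod, measure_univ, one_smul]

lemma w2sq_lt_top [OpensMeasurableSpace X] [IsProbabilityMeasure μ] [IsProbabilityMeasure ν]
    (hμ : FiniteSecondMoment μ) (hν : FiniteSecondMoment ν) : W2sq μ ν < ⊤ := by
  obtain ⟨y, -⟩ := id hμ
  refine lt_of_le_of_lt (w2sq_le_cost isCoupling_prod) ?_
  refine lt_of_le_of_lt (cost_prod_le μ ν y) ?_
  refine ENNReal.add_lt_top.mpr ⟨?_, ?_⟩
  · exact ENNReal.mul_lt_top (by norm_num)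
      (ENNReal.mul_lt_top (measure_lt_top ν _) (fsm_at hμ y))
  · exact ENNReal.mul_lt_top (by norm_num)
      (ENNReal.mul_lt_top (measure_lt_top μ _) (fsm_at hν y))

lemma w2sq_eq_ofReal_sq (h : W2sq μ ν ≠ ⊤) :
    W2sq μ ν = ENNReal.ofReal ((W2 μ ν) ^ 2) := by
  unfold W2
  rw [Real.sq_sqrt ENNReal.toReal_nonneg, ENNReal.ofReal_toReal h]

lemma w2_le_of_w2sq_le {c : ℝ} (hc : 0 ≤ c) (h : W2sq μ ν ≤ ENNReal.ofReal (c ^ 2)) :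
    W2 μ ν ≤ c := by
  have h1 : (W2sq μ ν).toReal ≤ c ^ 2 := by
    calc (W2sq μ ν).toReal ≤ (ENNReal.ofReal (c ^ 2)).toReal :=
          ENNReal.toReal_mono ENNReal.ofReal_ne_top h
      _ = c ^ 2 := ENNReal.toReal_ofReal (by positivity)
  calc W2 μ ν = Real.sqrt (W2sq μ ν).toReal := rfl
    _ ≤ Real.sqrt (c ^ 2) := Real.sqrt_le_sqrt h1
    _ = c := Real.sqrt_sq hc

end W2Helpers
section Core
set_option linter.unusedSectionVars false
set_option maxHeartbeats 1000000

lemma cde_core {X : Type*} [MetricSpace X] [MeasurableSpace X]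
    (m : Measure X) [IsProbabilityMeasure m] (hm : FiniteSecondMoment m)
    (K N : ℝ) (hK : 0 < K) (hN : 0 < N) (hCD : CDe K N m)
    (μ₀ : Measure X) (hs : MemP2star m μ₀) :
    Real.sqrt (K / N) * W2 μ₀ m ≤ Real.pi / 2 ∧
    Real.exp (-(Ent m μ₀).toReal / N) ≤ Real.cos (Real.sqrt (K / N) * W2 μ₀ m) := by
  have hκ : 0 < K / N := div_pos hK hN
  have hsqκ : 0 < Real.sqrt (K / N) := Real.sqrt_pos.mpr hκ
  haveI hprobμ : IsProbabilityMeasure μ₀ := hs.1.1.1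
  have hacμ : μ₀ ≪ m := hs.1.2
  have hcoe : (((Ent m μ₀).toReal : ℝ) : EReal) = Ent m μ₀ :=
    EReal.coe_toReal hs.2.1 hs.2.2
  have hE₀ : 0 ≤ (Ent m μ₀).toReal := by
    have h0 := ent_nonneg hacμ
    rw [← hcoe] at h0
    exact_mod_cast h0
  set u := Real.exp (-(Ent m μ₀).toReal / N) with hudef
  have hu : 0 < u := Real.exp_pos _
  have hu1 : u ≤ 1 := by
    rw [hudef, Real.exp_le_one_iff, neg_div]
    have : 0 ≤ (Ent m μ₀).toReal / N := div_nonneg hE₀ hN.le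
    linarith
  have hUμ : UNe N m μ₀ = ENNReal.ofReal u := une_eq hcoe.symm N
  have hentm : Ent m m = (((0:ℝ)) : EReal) := by rw [ent_self]; rfl
  have hUm : UNe N m m = 1 := by
    rw [une_eq hentm N]
    norm_num
  have mstar : MemP2star m m := by
    refine ⟨⟨⟨inferInstance, hm⟩, Measure.AbsolutelyContinuous.rfl⟩, ?_, ?_⟩
    · rw [hentm]; exact EReal.coe_ne_top 0
    · rw [hentm]; exact EReal.coe_ne_bot 0
  set θ := W2 μ₀ m with hθdef
  have hθ0 : 0 ≤ θ := Real.sqrt_nonneg _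
  by_cases hθz : θ = 0
  · rw [hθz, mul_zero, Real.cos_zero]
    exact ⟨by positivity, hu1⟩
  have hθpos : 0 < θ := lt_of_le_of_ne hθ0 (Ne.symm hθz)
  obtain ⟨ν, h0, h1, -, hstar, hineq⟩ := hCD μ₀ m hs mstar
  have hθ' : W2 (ν 0) (ν 1) = θ := by rw [h0, h1, hθdef]
  have hUt : ∀ t ∈ Set.Icc (0:ℝ) 1, UNe N m (ν t) ≤ 1 := by
    intro t ht
    have h := hstar t ht
    haveI : IsProbabilityMeasure (ν t) := h.1.1.1
    exact une_le_one h.1.2 N hN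
  -- Step 1 : (K/N) θ² < π²
  have hlt : K / N * θ ^ 2 < Real.pi ^ 2 := by
    by_contra hge
    push_neg at hge
    have h2 := hineq (1/2) ⟨by norm_num, by norm_num⟩
    unfold CDeIneqAt at h2
    rw [hθ', h0, h1, hUμ, hUm] at h2
    have hσ : sigmaK (K/N) (1/2) θ = ⊤ := by
      unfold sigmaK
      rw [if_neg (by positivity), if_neg (not_lt.mpr hge)]
    rw [hσ] at h2
    have htop : (⊤ : ℝ≥0∞) ≤ UNe N m (ν (1/2)) := by
      refine le_trans ?_ h2
      rw [mul_one]
      exact le_add_self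
    have := le_trans htop (hUt (1/2) ⟨by norm_num, by norm_num⟩)
    simp at this
  set a := Real.sqrt (K / N) * θ with hadef
  have ha0 : 0 < a := by positivity
  have ha2 : a ^ 2 = K / N * θ ^ 2 := by
    rw [hadef, mul_pow, Real.sq_sqrt hκ.le]
  have haπ : a < Real.pi := by nlinarith [Real.pi_pos, ha2, hlt]
  have hsa : 0 < Real.sin a := Real.sin_pos_of_pos_of_lt_pi ha0 haπ
  have hσval : ∀ s : ℝ, sigmaK (K/N) s θ =
      ENNReal.ofReal (Real.sin (s * a) / Real.sin a) := by
    intro s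
    unfold sigmaK sK
    rw [if_neg (by positivity), if_pos hlt, if_pos hκ, if_pos hκ]
    congr 1
    rw [show Real.sqrt (K/N) * (s * θ) = s * a by rw [hadef]; ring, ← hadef]
    have hc : Real.sqrt (K/N) ≠ 0 := hsqκ.ne'
    field_simp
  -- Step 2 : the real inequality family
  have hP : ∀ t ∈ Set.Icc (0:ℝ) 1,
      u * Real.sin ((1 - t) * a) + Real.sin (t * a) ≤ Real.sin a := by
    intro t ht
    obtain ⟨ht0, ht1⟩ := ht
    have s1 : 0 ≤ Real.sin ((1 - t) * a) := by
      apply Real.sin_nonneg_of_nonneg_of_le_pi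
      · nlinarith
      · nlinarith
    have s2 : 0 ≤ Real.sin (t * a) := by
      apply Real.sin_nonneg_of_nonneg_of_le_pi
      · nlinarith
      · nlinarith
    have hi := hineq t ⟨ht0, ht1⟩
    unfold CDeIneqAt at hi
    rw [hθ', h0, h1, hUμ, hUm, hσval, hσval, mul_one] at hi
    have hle1 := le_trans hi (hUt t ⟨ht0, ht1⟩)
    rw [← ENNReal.ofReal_mul (div_nonneg s1 hsa.le),
      ← ENNReal.ofReal_add (mul_nonneg (div_nonneg s1 hsa.le) hu.le)
        (div_nonneg s2 hsa.le), ENNReal.ofReal_le_one] at hle1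
    rw [div_mul_eq_mul_div, ← add_div, div_le_one hsa] at hle1
    linarith [hle1, mul_comm u (Real.sin ((1 - t) * a))]
  -- Goal 1 : a ≤ π/2
  have goal1 : a ≤ Real.pi / 2 := by
    by_contra hc
    push_neg at hc
    set t := Real.pi / (2 * a) with htdef
    have ht0 : 0 < t := by positivity
    have ht1 : t < 1 := by
      rw [htdef, div_lt_one (by positivity)]
      linarith
    have hta : t * a = Real.pi / 2 := by
      rw [htdef]
      field_simp
    have h1ta : (1 - t) * a = a - Real.pi / 2 := by
      rw [sub_mul, one_mul, hta]
    have hp := hP t ⟨ht0.le, ht1.le⟩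
    rw [hta, h1ta, Real.sin_pi_div_two] at hp
    have hsin2 : 0 < Real.sin (a - Real.pi / 2) :=
      Real.sin_pos_of_pos_of_lt_pi (by linarith) (by linarith [Real.pi_pos])
    nlinarith [Real.sin_le_one a, mul_pos hu hsin2]
  refine ⟨goal1, ?_⟩
  -- Goal 2 : u ≤ cos a
  have hIoo : ∀ t ∈ Set.Ioo (0:ℝ) 1,
      u * Real.cos ((1 - t) * (a / 2)) ≤ Real.cos ((1 + t) * (a / 2)) := by
    intro t ht
    obtain ⟨ht0, ht1⟩ := ht
    have hp := hP t ⟨ht0.le, ht1.le⟩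
    have hss : Real.sin a - Real.sin (t * a) =
        2 * Real.sin ((1 - t) * (a / 2)) * Real.cos ((1 + t) * (a / 2)) := by
      rw [Real.sin_sub_sin, show (a - t * a) / 2 = (1 - t) * (a / 2) by ring,
        show (a + t * a) / 2 = (1 + t) * (a / 2) by ring]
    have hdm : Real.sin ((1 - t) * a) =
        2 * Real.sin ((1 - t) * (a / 2)) * Real.cos ((1 - t) * (a / 2)) := by
      rw [show (1 - t) * a = 2 * ((1 - t) * (a / 2)) by ring, Real.sin_two_mul]
    have hs2 : 0 < Real.sin ((1 - t) * (a / 2)) := by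
      apply Real.sin_pos_of_pos_of_lt_pi
      · nlinarith
      · nlinarith [Real.pi_pos]
    have key : u * (2 * Real.sin ((1 - t) * (a / 2)) * Real.cos ((1 - t) * (a / 2))) ≤
        2 * Real.sin ((1 - t) * (a / 2)) * Real.cos ((1 + t) * (a / 2)) := by
      rw [← hdm, ← hss]
      linarith
    nlinarith [hs2, key]
  have hcont : Continuous fun t : ℝ =>
      Real.cos ((1 + t) * (a / 2)) - u * Real.cos ((1 - t) * (a / 2)) := by
    apply Continuous.sub
    · exact Real.continuous_cos.comp (by continuity)
    · exact continuous_const.mul (Real.continuous_cos.comp (by continuity))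
  have h1mem : (1:ℝ) ∈ closure (Set.Ioo (0:ℝ) 1) := by
    rw [closure_Ioo (by norm_num : (0:ℝ) ≠ 1)]
    exact ⟨by norm_num, le_rfl⟩
  have hge := le_on_closure (f := fun _ : ℝ => (0:ℝ))
    (g := fun t : ℝ => Real.cos ((1 + t) * (a / 2)) - u * Real.cos ((1 - t) * (a / 2)))
    (fun t ht => by have := hIoo t ht; show (0:ℝ) ≤ Real.cos ((1 + t) * (a / 2)) - u * Real.cos ((1 - t) * (a / 2)); linarith)
    continuousOn_const hcont.continuousOn h1mem
  have hfin : (0:ℝ) ≤ Real.cos ((1 + 1) * (a / 2)) - u * Real.cos ((1 - 1) * (a / 2)) := hge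
  rw [show ((1:ℝ) + 1) * (a / 2) = a by ring, show ((1:ℝ) - 1) * (a / 2) = 0 by ring,
    Real.cos_zero] at hfin
  linarith

end Core
section Approx
set_option linter.unusedSectionVars false
set_option maxHeartbeats 1000000

variable {X : Type*} [MetricSpace X] [MeasurableSpace X] {m μ : Measure X}

lemma xlogx_le_of_le {y M : ℝ} (hy : 0 ≤ y) (hM : y ≤ M) :
    y * Real.log y ≤ max M 1 * Real.log (max M 1) := by
  have hM1 : (1:ℝ) ≤ max M 1 := le_max_right _ _
  have hlogM : 0 ≤ Real.log (max M 1) := Real.log_nonneg hM1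
  rcases le_total y 1 with h | h
  · have hl : Real.log y ≤ 0 := Real.log_nonpos hy h
    nlinarith
  · have hyM : y ≤ max M 1 := le_trans hM (le_max_left _ _)
    have h1 : Real.log y ≤ Real.log (max M 1) := Real.log_le_log (by linarith) hyM
    have h2 : 0 ≤ Real.log y := Real.log_nonneg h
    nlinarith

lemma ent_finite [IsFiniteMeasure m] (hac : μ ≪ m)
    (hA : (∫⁻ x, ENNReal.ofReal (entDens m μ x) ∂m) < ⊤) :
    Ent m μ ≠ ⊤ ∧ Ent m μ ≠ ⊥ := by
  obtain ⟨-, h⟩ := ent_repr hac hA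
  rw [h]
  exact ⟨EReal.coe_ne_top _, EReal.coe_ne_bot _⟩

/-- Vanishing of integrals of the truncation excess. -/
lemma tendsto_excess {ρ : X → ℝ≥0∞} (hρm : Measurable ρ) (hae : ∀ᵐ x ∂m, ρ x < ⊤)
    (g : X → ℝ≥0∞) (hg : Measurable g) (hfin : (∫⁻ x, ρ x * g x ∂m) < ⊤) :
    Filter.Tendsto (fun n : ℕ => ∫⁻ x, (ρ x - min (ρ x) n) * g x ∂m)
      Filter.atTop (nhds 0) := by
  have hmeas : ∀ n : ℕ, Measurable fun x => (ρ x - min (ρ x) n) * g x :=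
    fun n => ((hρm.sub (hρm.min measurable_const)).mul hg)
  have hbound : ∀ n : ℕ, (fun x => (ρ x - min (ρ x) n) * g x) ≤ᵐ[m] fun x => ρ x * g x :=
    fun n => Filter.Eventually.of_forall fun x => mul_le_mul_left tsub_le_self _
  have hlim : ∀ᵐ x ∂m, Filter.Tendsto (fun n : ℕ => (ρ x - min (ρ x) n) * g x)
      Filter.atTop (nhds 0) := by
    filter_upwards [hae] with x hx
    obtain ⟨n₀, hn₀⟩ := ENNReal.exists_nat_gt hx.ne
    have hev : ∀ᶠ n : ℕ in Filter.atTop, (ρ x - min (ρ x) n) * g x = 0 := by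
      filter_upwards [Filter.eventually_ge_atTop n₀] with n hn
      have hle : ρ x ≤ (n : ℝ≥0∞) :=
        le_trans hn₀.le (by exact_mod_cast Nat.cast_le.mpr hn)
      rw [min_eq_left hle, tsub_self, zero_mul]
    exact Filter.Tendsto.congr' (hev.mono fun n hn => hn.symm) tendsto_const_nhds
  have := tendsto_lintegral_of_dominated_convergence _ hmeas hbound hfin.ne hlim
  simpa using this

end Approx
set_option maxHeartbeats 2000000 in
/-- **Corollary (N-Talagrand inequality).** -/
theorem N_talagrand
    {X : Type*} [MetricSpace X] [CompleteSpace X] [SecondCountableTopology X]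
    [MeasurableSpace X] [BorelSpace X]
    (m : Measure X) [IsLocallyFiniteMeasure m] [SigmaFinite m]
    [IsProbabilityMeasure m] (hm : FiniteSecondMoment m)
    (K N : ℝ) (hK : 0 < K) (hN : 0 < N) (hCD : CDe K N m)
    (μ : Measure X) (hμ : MemP2ac m μ) :
    W2 μ m ≤ Real.pi / 2 * Real.sqrt (N / K) ∧
    ((-(N * Real.log (Real.cos (Real.sqrt (K / N) * W2 μ m))) : ℝ) : EReal) ≤
      Ent m μ := by
  obtain ⟨⟨hprobμ, hfsmμ⟩, hacμ⟩ := hμ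
  haveI : IsProbabilityMeasure μ := hprobμ
  obtain ⟨x₀, -⟩ := id hm
  have hκ : 0 < K / N := div_pos hK hN
  have hsqκ : 0 < Real.sqrt (K / N) := Real.sqrt_pos.mpr hκ
  have hC0 : 0 ≤ Real.pi / 2 * Real.sqrt (N / K) := by positivity
  have hconv : ∀ w : ℝ, Real.sqrt (K / N) * w ≤ Real.pi / 2 →
      w ≤ Real.pi / 2 * Real.sqrt (N / K) := by
    intro w h
    have hNK : N / K = (K / N)⁻¹ := by
      field_simp
    rw [hNK, Real.sqrt_inv, ← div_eq_mul_inv, le_div_iff₀ hsqκ]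
    linarith [mul_comm w (Real.sqrt (K / N))]
  -- density setup
  set ρ := μ.rnDeriv m with hρdef
  have hρm : Measurable ρ := Measure.measurable_rnDeriv μ m
  have hwd : m.withDensity ρ = μ := Measure.withDensity_rnDeriv_eq μ m hacμ
  have hρint : (∫⁻ x, ρ x ∂m) = 1 := by
    have h : m.withDensity ρ Set.univ = ∫⁻ x in Set.univ, ρ x ∂m :=
      withDensity_apply ρ MeasurableSet.univ
    rw [hwd, measure_univ, setLIntegral_univ] at h
    exact h.symm
  have hρae : ∀ᵐ x ∂m, ρ x < ⊤ := Measure.rnDeriv_lt_top μ m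
  have hGm : Measurable fun x : X => ENNReal.ofReal (dist x₀ x ^ 2) :=
    ((continuous_const.dist continuous_id).pow 2).measurable.ennreal_ofReal
  have hI2m : (∫⁻ x, ENNReal.ofReal (dist x₀ x ^ 2) ∂m) < ⊤ := fsm_at hm x₀
  have hI2μ : (∫⁻ x, ρ x * ENNReal.ofReal (dist x₀ x ^ 2) ∂m) < ⊤ := by
    have h := lintegral_withDensity_eq_lintegral_mul m hρm hGm
    simp only [Pi.mul_apply] at h
    rw [hwd] at h
    rw [← h]
    exact fsm_at hfsmμ x₀
  -- limits of excess integrals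
  have hT1 : Filter.Tendsto (fun n : ℕ => ∫⁻ x, (ρ x - min (ρ x) n) ∂m)
      Filter.atTop (nhds 0) := by
    have h := tendsto_excess (m := m) hρm hρae (fun _ => 1) measurable_const
      (by simpa [hρint] using (by norm_num : (1:ℝ≥0∞) < ⊤))
    simpa using h
  have hTG : Filter.Tendsto
      (fun n : ℕ => ∫⁻ x, (ρ x - min (ρ x) n) * ENNReal.ofReal (dist x₀ x ^ 2) ∂m)
      Filter.atTop (nhds 0) :=
    tendsto_excess (m := m) hρm hρae _ hGm hI2μ
  have htail : Filter.Tendsto (fun n : ℕ =>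
      2 * (∫⁻ x, (ρ x - min (ρ x) n) * ENNReal.ofReal (dist x₀ x ^ 2) ∂m) +
      2 * ((∫⁻ x, (ρ x - min (ρ x) n) ∂m) * (∫⁻ x, ENNReal.ofReal (dist x₀ x ^ 2) ∂m)))
      Filter.atTop (nhds 0) := by
    have h1 := ENNReal.Tendsto.const_mul (a := 2) hTG (Or.inr (by norm_num))
    have h2 := ENNReal.Tendsto.mul_const (b := ∫⁻ x, ENNReal.ofReal (dist x₀ x ^ 2) ∂m)
      hT1 (Or.inr hI2m.ne)
    have h3 := ENNReal.Tendsto.const_mul (a := 2) h2 (Or.inr (by norm_num))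
    simpa using h1.add h3
  constructor
  · -- Part A : the W2 bound
    apply w2_le_of_w2sq_le hC0
    refine ENNReal.le_of_forall_pos_le_add ?_
    intro ε hε _
    have hev1 := htail.eventually_lt_const
      (show (0:ℝ≥0∞) < (ε : ℝ≥0∞) / 2 by
        simp [pos_iff_ne_zero, ENNReal.div_eq_zero_iff, hε.ne'])
    have hev2 := hT1.eventually_lt_const (show (0:ℝ≥0∞) < 1/2 by norm_num)
    obtain ⟨n, htailn, hen⟩ := (hev1.and hev2).exists
    set cn := ∫⁻ x, min (ρ x) (n : ℝ≥0∞) ∂m with hcndef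
    have hminm : Measurable fun x => min (ρ x) (n : ℝ≥0∞) := hρm.min measurable_const
    have hce : cn + (∫⁻ x, (ρ x - min (ρ x) n) ∂m) = 1 := by
      rw [hcndef, ← lintegral_add_left hminm, ← hρint]
      apply lintegral_congr fun x => ?_
      exact add_tsub_cancel_of_le (min_le_left _ _)
    have hcn1 : cn ≤ 1 := by rw [← hce]; exact le_self_add
    have hcnT : cn ≠ ⊤ := (lt_of_le_of_lt hcn1 (by norm_num)).ne
    have hcn0 : cn ≠ 0 := by
      intro h
      rw [h, zero_add] at hce
      rw [hce] at hen
      exact absurd hen (by norm_num)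
    have hcninvT : cn⁻¹ ≠ ⊤ := ENNReal.inv_ne_top.mpr hcn0
    set μ' := m.withDensity (fun x => cn⁻¹ * min (ρ x) n) with hμ'def
    have hμ'm : Measurable fun x => cn⁻¹ * min (ρ x) (n : ℝ≥0∞) := hminm.const_mul _
    have hμ'univ : μ' Set.univ = 1 := by
      rw [hμ'def, withDensity_apply _ MeasurableSet.univ, setLIntegral_univ,
        lintegral_const_mul' _ _ hcninvT, ← hcndef, ENNReal.inv_mul_cancel hcn0 hcnT]
    haveI hμ'prob : IsProbabilityMeasure μ' := ⟨hμ'univ⟩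
    have hμ'ac : μ' ≪ m := withDensity_absolutelyContinuous m _
    have hμ'G : (∫⁻ x, ENNReal.ofReal (dist x₀ x ^ 2) ∂μ') < ⊤ := by
      rw [hμ'def, lintegral_withDensity_eq_lintegral_mul m hμ'm hGm]
      calc (∫⁻ x, ((fun x => cn⁻¹ * min (ρ x) (n:ℝ≥0∞)) *
              fun x => ENNReal.ofReal (dist x₀ x ^ 2)) x ∂m)
          ≤ ∫⁻ x, cn⁻¹ * (ρ x * ENNReal.ofReal (dist x₀ x ^ 2)) ∂m := by
            refine lintegral_mono fun x => ?_
            simp only [Pi.mul_apply]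
            rw [mul_assoc]
            exact mul_le_mul_right (mul_le_mul_left (min_le_left _ _) _) _
        _ = cn⁻¹ * ∫⁻ x, ρ x * ENNReal.ofReal (dist x₀ x ^ 2) ∂m :=
            lintegral_const_mul' _ _ hcninvT
        _ < ⊤ := ENNReal.mul_lt_top (lt_top_iff_ne_top.mpr hcninvT) hI2μ
    have hμ'fsm : FiniteSecondMoment μ' := ⟨x₀, hμ'G⟩
    have hrnd : μ'.rnDeriv m =ᵐ[m] fun x => cn⁻¹ * min (ρ x) n := by
      rw [hμ'def]; exact Measure.rnDeriv_withDensity m hμ'm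
    have hMrT : cn⁻¹ * (n : ℝ≥0∞) ≠ ⊤ := ENNReal.mul_ne_top hcninvT (by simp)
    have hA' : (∫⁻ x, ENNReal.ofReal (entDens m μ' x) ∂m) < ⊤ := by
      set Mr := (cn⁻¹ * (n : ℝ≥0∞)).toReal with hMrdef
      have hbd : ∀ᵐ x ∂m, ENNReal.ofReal (entDens m μ' x) ≤
          ENNReal.ofReal (max Mr 1 * Real.log (max Mr 1)) := by
        filter_upwards [hrnd] with x hx
        apply ENNReal.ofReal_le_ofReal
        unfold entDens
        rw [hx]
        apply xlogx_le_of_le ENNReal.toReal_nonneg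
        exact ENNReal.toReal_mono hMrT (mul_le_mul_right (min_le_right _ _) _)
      calc (∫⁻ x, ENNReal.ofReal (entDens m μ' x) ∂m)
          ≤ ∫⁻ _, ENNReal.ofReal (max Mr 1 * Real.log (max Mr 1)) ∂m :=
            lintegral_mono_ae hbd
        _ = ENNReal.ofReal (max Mr 1 * Real.log (max Mr 1)) * m Set.univ :=
            lintegral_const _
        _ < ⊤ := ENNReal.mul_lt_top ENNReal.ofReal_lt_top (measure_lt_top m _)
    obtain ⟨hE'T, hE'B⟩ := ent_finite hμ'ac hA'
    have hμ'star : MemP2star m μ' := ⟨⟨⟨hμ'prob, hμ'fsm⟩, hμ'ac⟩, hE'T, hE'B⟩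
    have hW2' : W2 μ' m ≤ Real.pi / 2 * Real.sqrt (N / K) :=
      hconv _ (cde_core m hm K N hK hN hCD μ' hμ'star).1
    have hW2sq'fin : W2sq μ' m < ⊤ := w2sq_lt_top hμ'fsm hm
    have hW2sq'le : W2sq μ' m ≤ ENNReal.ofReal ((Real.pi / 2 * Real.sqrt (N / K)) ^ 2) := by
      rw [w2sq_eq_ofReal_sq hW2sq'fin.ne]
      exact ENNReal.ofReal_le_ofReal (pow_le_pow_left₀ (Real.sqrt_nonneg _) hW2' 2)
    have hq : ∃ q : Measure (X × X), IsCoupling μ' m q ∧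
        (∫⁻ p, ENNReal.ofReal (dist p.1 p.2 ^ 2) ∂q) <
          ENNReal.ofReal ((Real.pi / 2 * Real.sqrt (N / K)) ^ 2) + (ε : ℝ≥0∞) / 2 := by
      have h2 : W2sq μ' m <
          ENNReal.ofReal ((Real.pi / 2 * Real.sqrt (N / K)) ^ 2) + (ε : ℝ≥0∞) / 2 :=
        lt_of_le_of_lt hW2sq'le (ENNReal.lt_add_right ENNReal.ofReal_ne_top
          (by simp [ENNReal.div_eq_zero_iff, hε.ne']))
      unfold W2sq at h2
      rw [iInf_lt_iff] at h2
      obtain ⟨q, hq2⟩ := h2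
      rw [iInf_lt_iff] at hq2
      obtain ⟨hqc, hq2⟩ := hq2
      exact ⟨q, hqc, hq2⟩
    obtain ⟨q, hqc, hqcost⟩ := hq
    set νe := m.withDensity (fun x => ρ x - min (ρ x) n) with hνedef
    have hνem : Measurable fun x => ρ x - min (ρ x) (n : ℝ≥0∞) := hρm.sub hminm
    have hνeuniv : νe Set.univ = ∫⁻ x, (ρ x - min (ρ x) n) ∂m := by
      rw [hνedef, withDensity_apply _ MeasurableSet.univ, setLIntegral_univ]
    haveI : IsFiniteMeasure νe :=
      ⟨by rw [hνeuniv]; exact lt_trans hen (by norm_num)⟩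
    have hsfst : Measure.map Prod.fst (cn • q + νe.prod m) = μ := by
      rw [Measure.map_add _ _ measurable_fst, Measure.map_smul, hqc.1,
        Measure.map_fst_prod, measure_univ, one_smul]
      rw [hμ'def, hνedef, ← withDensity_smul' cn _ hcnT]
      rw [show (cn • fun x => cn⁻¹ * min (ρ x) (n:ℝ≥0∞)) = fun x => min (ρ x) (n:ℝ≥0∞) from
        funext fun x => by
          simp only [Pi.smul_apply, smul_eq_mul]
          rw [← mul_assoc, ENNReal.mul_inv_cancel hcn0 hcnT, one_mul]]
      rw [← withDensity_add_left hminm, ← hwd]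
      congr 1
      funext x
      simp only [Pi.add_apply]
      exact add_tsub_cancel_of_le (min_le_left _ _)
    have hssnd : Measure.map Prod.snd (cn • q + νe.prod m) = m := by
      rw [Measure.map_add _ _ measurable_snd, Measure.map_smul, hqc.2,
        Measure.map_snd_prod, hνeuniv, ← add_smul, hce, one_smul]
    refine le_trans (w2sq_le_cost (μ := μ) (ν := m) ⟨hsfst, hssnd⟩) ?_
    rw [lintegral_add_measure, lintegral_smul_measure]
    have hprodcost : (∫⁻ p, ENNReal.ofReal (dist p.1 p.2 ^ 2) ∂(νe.prod m)) ≤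
        2 * (∫⁻ x, (ρ x - min (ρ x) n) * ENNReal.ofReal (dist x₀ x ^ 2) ∂m) +
        2 * ((∫⁻ x, (ρ x - min (ρ x) n) ∂m) *
          (∫⁻ x, ENNReal.ofReal (dist x₀ x ^ 2) ∂m)) := by
      refine le_trans (cost_prod_le νe m x₀) ?_
      rw [measure_univ, one_mul, hνeuniv]
      have hGνe : (∫⁻ x, ENNReal.ofReal (dist x₀ x ^ 2) ∂νe) =
          ∫⁻ x, (ρ x - min (ρ x) n) * ENNReal.ofReal (dist x₀ x ^ 2) ∂m := by
        rw [hνedef, lintegral_withDensity_eq_lintegral_mul m hνem hGm]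
        simp only [Pi.mul_apply]
      rw [hGνe]
    calc cn * (∫⁻ p, ENNReal.ofReal (dist p.1 p.2 ^ 2) ∂q) +
          (∫⁻ p, ENNReal.ofReal (dist p.1 p.2 ^ 2) ∂(νe.prod m))
        ≤ 1 * (ENNReal.ofReal ((Real.pi / 2 * Real.sqrt (N / K)) ^ 2) + (ε : ℝ≥0∞) / 2) +
            (ε : ℝ≥0∞) / 2 := by
          gcongr
          exact le_trans hprodcost htailn.le
      _ = ENNReal.ofReal ((Real.pi / 2 * Real.sqrt (N / K)) ^ 2) + (ε : ℝ≥0∞) := by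
          rw [one_mul, add_assoc, ENNReal.add_halves]
  · -- Part B : the entropy bound
    by_cases htop : Ent m μ = ⊤
    · rw [htop]; exact le_top
    · have hbot : Ent m μ ≠ ⊥ := ent_ne_bot
      have hstar : MemP2star m μ := ⟨⟨⟨hprobμ, hfsmμ⟩, hacμ⟩, htop, hbot⟩
      obtain ⟨-, h2⟩ := cde_core m hm K N hK hN hCD μ hstar
      have hcoe : (((Ent m μ).toReal : ℝ) : EReal) = Ent m μ := EReal.coe_toReal htop hbot
      have hcos : 0 < Real.cos (Real.sqrt (K / N) * W2 μ m) :=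
        lt_of_lt_of_le (Real.exp_pos _) h2
      have hlog : -(Ent m μ).toReal / N ≤ Real.log (Real.cos (Real.sqrt (K / N) * W2 μ m)) := by
        have := Real.log_le_log (Real.exp_pos _) h2
        rwa [Real.log_exp] at this
      rw [← hcoe]
      rw [EReal.coe_le_coe_iff]
      rw [div_le_iff₀ hN] at hlog
      nlinarith [hlog]
end
end

section
/- For every fixed t ∈ [0,1], the function G_t : ℝ × ℝ × (−∞, π²) → ℝ defined by G_t(x, y, κ) = log[σ_κ^{(1−t)}(1)·e^x + σ_κ^{(t)}(1)·e^y] is convex (jointly in the three variables). -/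
open MeasureTheory Filter Set ENNReal

noncomputable section
open scoped Classical

/-- The distortion coefficient `σ_κ^{(t)}(1)`, real-valued (finite for `κ < π²`). -/
def sigmaR (κ t : ℝ) : ℝ := if κ = 0 then t else sK κ t / sK κ 1

section Aux
open Real Topology

lemma sK_pos {κ θ : ℝ} (hκ : κ < π^2) (h0 : 0 < θ) (h1 : θ ≤ 1) : 0 < sK κ θ := by
  unfold sK
  split_ifs with h h'
  · apply div_pos _ (Real.sqrt_pos.2 h)
    apply Real.sin_pos_of_pos_of_lt_pi (by positivity)
    calc Real.sqrt κ * θ ≤ Real.sqrt κ * 1 := by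
          exact mul_le_mul_of_nonneg_left h1 (Real.sqrt_nonneg κ)
      _ = Real.sqrt κ := mul_one _
      _ < π := (Real.sqrt_lt' Real.pi_pos).2 hκ
  · exact h0
  · have hneg : 0 < -κ := by
      push_neg at h
      rcases lt_or_eq_of_le h with h2 | h2
      · linarith
      · exact absurd h2 h'
    exact div_pos (Real.sinh_pos_iff.2 (by positivity : (0:ℝ) < Real.sqrt (-κ) * θ)) (Real.sqrt_pos.2 hneg)

lemma fac_pos {κ θ c : ℝ} (hκ : κ < π^2) (h0 : 0 ≤ θ) (h1 : θ ≤ 1) (hc : π^2 ≤ c) :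
    0 < c - κ * θ^2 := by
  rcases le_or_gt κ 0 with h | h
  · nlinarith [sq_nonneg θ, Real.pi_pos, mul_nonpos_of_nonpos_of_nonneg h (sq_nonneg θ)]
  · have hθ2 : θ^2 ≤ 1 := by nlinarith
    nlinarith [mul_le_of_le_one_right h.le hθ2]

lemma sigmaR_pos {κ s : ℝ} (hκ : κ < π^2) (hs0 : 0 < s) (hs1 : s ≤ 1) : 0 < sigmaR κ s := by
  unfold sigmaR; split_ifs with h
  · exact hs0
  · exact div_pos (sK_pos hκ hs0 hs1) (sK_pos hκ one_pos le_rfl)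

lemma sigmaR_eq {κ s : ℝ} (hκ : κ < π^2) : sigmaR κ s = sK κ s / sK κ 1 := by
  unfold sigmaR; split_ifs with h
  · subst h; simp [sK]
  · rfl

lemma sigmaR_one {κ : ℝ} (hκ : κ < π^2) : sigmaR κ 1 = 1 := by
  rw [sigmaR_eq hκ, div_self (sK_pos hκ one_pos le_rfl).ne']

lemma sigmaR_zero {κ : ℝ} (hκ : κ < π^2) : sigmaR κ 0 = 0 := by
  rw [sigmaR_eq hκ]
  have : sK κ 0 = 0 := by unfold sK; split_ifs <;> simp
  simp [this]

lemma phi_convexOn {s c : ℝ} (hs0 : 0 < s) (hs1 : s ≤ 1) (hc : π^2 ≤ c) :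
    ConvexOn ℝ (Iio (π^2)) (fun κ => Real.log (c - κ * s^2) - Real.log (c - κ)) := by
  have hpi : (0:ℝ) < π^2 := by positivity
  have hQ : ∀ κ ∈ Iio (π^2), 0 < c - κ * s^2 := fun κ hκ => fac_pos hκ hs0.le hs1 hc
  have hP : ∀ κ ∈ Iio (π^2), 0 < c - κ := fun κ hκ => by
    have := fac_pos (θ := 1) hκ zero_le_one le_rfl hc; simpa using this
  apply convexOn_of_hasDerivWithinAt2_nonneg (convex_Iio _)
    (f' := fun κ => -s^2 * (c - κ * s^2)⁻¹ + (c - κ)⁻¹)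
    (f'' := fun κ => 1/(c - κ)^2 - s^4/(c - κ * s^2)^2)
  · intro κ hκ
    exact (((by fun_prop : ContinuousAt (fun κ : ℝ => c - κ * s^2) κ).log (hQ κ hκ).ne').sub
      ((by fun_prop : ContinuousAt (fun κ : ℝ => c - κ) κ).log (hP κ hκ).ne')).continuousWithinAt
  · intro κ hκ
    rw [interior_Iio] at hκ
    have h1 : HasDerivAt (fun κ : ℝ => c - κ * s^2) (-s^2) κ := by
      simpa using ((hasDerivAt_id κ).mul_const (s^2)).const_sub c
    have h2 : HasDerivAt (fun κ : ℝ => c - κ) (-1) κ := by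
      simpa using (hasDerivAt_id κ).const_sub c
    have hl1 := (Real.hasDerivAt_log (hQ κ hκ).ne').comp κ h1
    have hl2 := (Real.hasDerivAt_log (hP κ hκ).ne').comp κ h2
    have := (hl1.sub hl2).hasDerivWithinAt (s := interior (Iio (π^2)))
    refine this.congr_deriv ?_
    ring
  · intro κ hκ
    rw [interior_Iio] at hκ
    have h1 : HasDerivAt (fun κ : ℝ => c - κ * s^2) (-s^2) κ := by
      simpa using ((hasDerivAt_id κ).mul_const (s^2)).const_sub c
    have h2 : HasDerivAt (fun κ : ℝ => c - κ) (-1) κ := by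
      simpa using (hasDerivAt_id κ).const_sub c
    have hi1 := (h1.inv (hQ κ hκ).ne').const_mul (-s^2)
    have hi2 := h2.inv (hP κ hκ).ne'
    have := (hi1.add hi2).hasDerivWithinAt (s := interior (Iio (π^2)))
    refine this.congr_deriv ?_
    field_simp
    ring
  · intro κ hκ
    rw [interior_Iio] at hκ
    have hQκ := hQ κ hκ
    have hPκ := hP κ hκ
    have hs2 : s^2 ≤ 1 := by nlinarith
    have key : s^2 * (c - κ) ≤ c - κ * s^2 := by
      nlinarith [mul_le_of_le_one_left (le_trans hpi.le hc) hs2]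
    have h4 : s^4 * (c - κ)^2 ≤ (c - κ * s^2)^2 := by
      have := mul_le_mul key key (by positivity) hQκ.le
      nlinarith [this]
    have : s^4/(c - κ * s^2)^2 ≤ 1/(c - κ)^2 := by
      rw [div_le_div_iff₀ (by positivity) (by positivity)]
      nlinarith [h4]
    linarith

lemma tendsto_euler_sinh_prod (x : ℝ) :
    Tendsto (fun n : ℕ => π * x * ∏ j ∈ Finset.range n, (1 + x^2/((j:ℝ)+1)^2)) atTop
      (𝓝 (Real.sinh (π * x))) := by
  have h := Complex.tendsto_euler_sin_prod (x * Complex.I)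
  have h2 := (Complex.continuous_im.tendsto _).comp h
  have hlim : (Complex.sin (↑π * (↑x * Complex.I))).im = Real.sinh (π * x) := by
    have : (↑π * (↑x * Complex.I)) = ((π * x : ℝ) : ℂ) * Complex.I := by push_cast; ring
    rw [this, Complex.sin_mul_I]
    simp [← Complex.ofReal_mul, ← Complex.ofReal_sinh]
  rw [hlim] at h2
  apply h2.congr
  intro n
  have hprod : ∏ j ∈ Finset.range n, ((1:ℂ) - (↑x * Complex.I)^2/((j:ℂ)+1)^2)
      = ((∏ j ∈ Finset.range n, (1 + x^2/((j:ℝ)+1)^2) : ℝ) : ℂ) := by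
    rw [Complex.ofReal_prod]
    refine Finset.prod_congr rfl fun j _ => ?_
    push_cast
    rw [mul_pow, Complex.I_sq]
    ring
  simp only [Function.comp_apply]
  rw [hprod]
  have : (↑π * (↑x * Complex.I) * ((∏ j ∈ Finset.range n, (1 + x^2/((j:ℝ)+1)^2) : ℝ) : ℂ))
      = ((π * x * ∏ j ∈ Finset.range n, (1 + x^2/((j:ℝ)+1)^2) : ℝ) : ℂ) * Complex.I := by
    push_cast; ring
  rw [this, Complex.mul_I_im, Complex.ofReal_re]

lemma tendsto_P (κ θ : ℝ) :
    Tendsto (fun n : ℕ => θ * ∏ j ∈ Finset.range n, (1 - κ * θ^2/(((j:ℝ)+1)^2 * π^2))) atTop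
      (𝓝 (sK κ θ)) := by
  rcases lt_trichotomy κ 0 with hκ | hκ | hκ
  · set x := Real.sqrt (-κ) * θ / π with hx
    have hπ : (π:ℝ) ≠ 0 := Real.pi_ne_zero
    have hx2 : x^2 = -κ * θ^2 / π^2 := by
      rw [hx, div_pow, mul_pow, Real.sq_sqrt (by linarith)]
    have h := (tendsto_euler_sinh_prod x).div_const (Real.sqrt (-κ))
    have hπx : π * x = Real.sqrt (-κ) * θ := by rw [hx]; field_simp
    have hsK : sK κ θ = Real.sinh (π * x) / Real.sqrt (-κ) := by
      rw [hπx]; unfold sK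
      rw [if_neg (by linarith), if_neg (by linarith)]
    rw [hsK]
    apply h.congr
    intro n
    have : π * x / Real.sqrt (-κ) = θ := by
      rw [hπx]; field_simp [Real.sqrt_ne_zero'.2 (by linarith : (0:ℝ) < -κ)]
    rw [mul_div_right_comm, this]
    congr 1
    refine Finset.prod_congr rfl fun j _ => ?_
    rw [hx2]
    field_simp
    ring
  · subst hκ
    simp only [zero_mul, zero_div, sub_zero, Finset.prod_const_one, mul_one]
    have : sK 0 θ = θ := by unfold sK; simp
    rw [this]
    exact tendsto_const_nhds
  · set x := Real.sqrt κ * θ / π with hx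
    have hπ : (π:ℝ) ≠ 0 := Real.pi_ne_zero
    have hx2 : x^2 = κ * θ^2 / π^2 := by
      rw [hx, div_pow, mul_pow, Real.sq_sqrt hκ.le]
    have h := (Real.tendsto_euler_sin_prod x).div_const (Real.sqrt κ)
    have hπx : π * x = Real.sqrt κ * θ := by rw [hx]; field_simp
    have hsK : sK κ θ = Real.sin (π * x) / Real.sqrt κ := by
      rw [hπx]; unfold sK; rw [if_pos hκ]
    rw [hsK]
    apply h.congr
    intro n
    have : π * x / Real.sqrt κ = θ := by
      rw [hπx]; field_simp [Real.sqrt_ne_zero'.2 hκ]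
    rw [mul_div_right_comm, this]
    congr 1
    refine Finset.prod_congr rfl fun j _ => ?_
    rw [hx2]
    field_simp

variable {E : Type*} [AddCommGroup E] [Module ℝ E]

lemma convexOn_of_tendsto {S : Set E} (hS : Convex ℝ S) {f : ℕ → E → ℝ} {g : E → ℝ}
    (hf : ∀ n, ConvexOn ℝ S (f n)) (h : ∀ x ∈ S, Tendsto (fun n => f n x) atTop (𝓝 (g x))) :
    ConvexOn ℝ S g := by
  refine ⟨hS, fun x hx y hy a b ha hb hab => ?_⟩
  have hz : a • x + b • y ∈ S := hS hx hy ha hb hab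
  refine le_of_tendsto_of_tendsto' (h _ hz) (((h x hx).const_mul a).add ((h y hy).const_mul b))
    fun n => ?_
  exact (hf n).2 hx hy ha hb hab

lemma convexOn_congr {S : Set E} {f g : E → ℝ} (hg : ConvexOn ℝ S g)
    (h : ∀ x ∈ S, f x = g x) : ConvexOn ℝ S f := by
  refine ⟨hg.1, fun x hx y hy a b ha hb hab => ?_⟩
  rw [h _ hx, h _ hy, h _ (hg.1 hx hy ha hb hab)]
  exact hg.2 hx hy ha hb hab

lemma holder2 {a b c d w1 w2 : ℝ} (ha : 0 < a) (hb : 0 < b) (hc : 0 < c) (hd : 0 < d)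
    (hw1 : 0 ≤ w1) (hw2 : 0 ≤ w2) (hw : w1 + w2 = 1) :
    a ^ w1 * b ^ w2 + c ^ w1 * d ^ w2 ≤ (a + c) ^ w1 * (b + d) ^ w2 := by
  have hac : 0 < a + c := by linarith
  have hbd : 0 < b + d := by linarith
  have e1 : a ^ w1 * b ^ w2 = (a + c) ^ w1 * (b + d) ^ w2 * ((a/(a+c)) ^ w1 * (b/(b+d)) ^ w2) := by
    rw [Real.div_rpow ha.le hac.le, Real.div_rpow hb.le hbd.le]
    field_simp
  have e2 : c ^ w1 * d ^ w2 = (a + c) ^ w1 * (b + d) ^ w2 * ((c/(a+c)) ^ w1 * (d/(b+d)) ^ w2) := by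
    rw [Real.div_rpow hc.le hac.le, Real.div_rpow hd.le hbd.le]
    field_simp
  have g1 : (a/(a+c)) ^ w1 * (b/(b+d)) ^ w2 ≤ w1 * (a/(a+c)) + w2 * (b/(b+d)) :=
    Real.geom_mean_le_arith_mean2_weighted hw1 hw2 (by positivity) (by positivity) hw
  have g2 : (c/(a+c)) ^ w1 * (d/(b+d)) ^ w2 ≤ w1 * (c/(a+c)) + w2 * (d/(b+d)) :=
    Real.geom_mean_le_arith_mean2_weighted hw1 hw2 (by positivity) (by positivity) hw
  have hpos : (0:ℝ) < (a + c) ^ w1 * (b + d) ^ w2 := by positivity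
  calc a ^ w1 * b ^ w2 + c ^ w1 * d ^ w2
      = (a + c) ^ w1 * (b + d) ^ w2 *
        ((a/(a+c)) ^ w1 * (b/(b+d)) ^ w2 + (c/(a+c)) ^ w1 * (d/(b+d)) ^ w2) := by
        rw [e1, e2]; ring
    _ ≤ (a + c) ^ w1 * (b + d) ^ w2 *
        ((w1 * (a/(a+c)) + w2 * (b/(b+d))) + (w1 * (c/(a+c)) + w2 * (d/(b+d)))) := by
        apply mul_le_mul_of_nonneg_left (by linarith) hpos.le
    _ = (a + c) ^ w1 * (b + d) ^ w2 := by
        rw [show w1 * (a/(a+c)) + w2 * (b/(b+d)) + (w1 * (c/(a+c)) + w2 * (d/(b+d)))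
            = w1 * ((a+c)/(a+c)) + w2 * ((b+d)/(b+d)) by ring]
        rw [div_self hac.ne', div_self hbd.ne']
        simp [hw]

lemma lse_convexOn {S : Set E} {A B : E → ℝ} (hA : ConvexOn ℝ S A) (hB : ConvexOn ℝ S B) :
    ConvexOn ℝ S (fun p => Real.log (Real.exp (A p) + Real.exp (B p))) := by
  refine ⟨hA.1, fun x hx y hy a b ha hb hab => ?_⟩
  set z := a • x + b • y
  have hz : z ∈ S := hA.1 hx hy ha hb hab
  have expA : Real.exp (A z) ≤ Real.exp (A x) ^ a * Real.exp (A y) ^ b := by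
    rw [← Real.exp_mul, ← Real.exp_mul, ← Real.exp_add]
    refine Real.exp_le_exp.2 ?_
    have := hA.2 hx hy ha hb hab
    simp only [smul_eq_mul] at this
    linarith
  have expB : Real.exp (B z) ≤ Real.exp (B x) ^ a * Real.exp (B y) ^ b := by
    rw [← Real.exp_mul, ← Real.exp_mul, ← Real.exp_add]
    refine Real.exp_le_exp.2 ?_
    have := hB.2 hx hy ha hb hab
    simp only [smul_eq_mul] at this
    linarith
  have hold := holder2 (Real.exp_pos (A x)) (Real.exp_pos (A y)) (Real.exp_pos (B x))
    (Real.exp_pos (B y)) ha hb hab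
  have step : Real.exp (A z) + Real.exp (B z)
      ≤ (Real.exp (A x) + Real.exp (B x)) ^ a * (Real.exp (A y) + Real.exp (B y)) ^ b := by
    calc Real.exp (A z) + Real.exp (B z)
        ≤ Real.exp (A x) ^ a * Real.exp (A y) ^ b + Real.exp (B x) ^ a * Real.exp (B y) ^ b :=
          add_le_add expA expB
      _ ≤ _ := hold
  have hx' : (0:ℝ) < Real.exp (A x) + Real.exp (B x) := by positivity
  have hy' : (0:ℝ) < Real.exp (A y) + Real.exp (B y) := by positivity
  calc Real.log (Real.exp (A z) + Real.exp (B z))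
      ≤ Real.log ((Real.exp (A x) + Real.exp (B x)) ^ a * (Real.exp (A y) + Real.exp (B y)) ^ b) :=
        Real.log_le_log (by positivity) step
    _ = a * Real.log (Real.exp (A x) + Real.exp (B x))
        + b * Real.log (Real.exp (A y) + Real.exp (B y)) := by
        rw [Real.log_mul (by positivity) (by positivity), Real.log_rpow hx', Real.log_rpow hy']

lemma c_ge (j : ℕ) : π^2 ≤ ((j:ℝ)+1)^2 * π^2 := by
  have h1 : (1:ℝ) ≤ (j:ℝ)+1 := by
    have : (0:ℝ) ≤ (j:ℝ) := Nat.cast_nonneg j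
    linarith
  have h2 := mul_le_mul h1 h1 zero_le_one (by linarith : (0:ℝ) ≤ (j:ℝ)+1)
  nlinarith [Real.pi_pos, h2]

lemma tendsto_logsum {κ s : ℝ} (hκ : κ < π^2) (hs0 : 0 < s) (hs1 : s ≤ 1) :
    Tendsto (fun n : ℕ => Real.log s + ∑ j ∈ Finset.range n,
        (Real.log (((j:ℝ)+1)^2 * π^2 - κ * s^2) - Real.log (((j:ℝ)+1)^2 * π^2 - κ))) atTop
      (𝓝 (Real.log (sigmaR κ s))) := by
  have hcpos : ∀ j : ℕ, (0:ℝ) < ((j:ℝ)+1)^2 * π^2 := fun j => by positivity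
  have hQ : ∀ j : ℕ, (0:ℝ) < ((j:ℝ)+1)^2 * π^2 - κ * s^2 := fun j =>
    fac_pos hκ hs0.le hs1 (c_ge j)
  have hP : ∀ j : ℕ, (0:ℝ) < ((j:ℝ)+1)^2 * π^2 - κ := fun j => by
    have := fac_pos (θ := 1) hκ zero_le_one le_rfl (c_ge j); simpa using this
  have hfs : ∀ j : ℕ, (0:ℝ) < 1 - κ * s^2 / (((j:ℝ)+1)^2 * π^2) := fun j => by
    have h := div_pos (hQ j) (hcpos j)
    have : (((j:ℝ)+1)^2 * π^2 - κ * s^2) / (((j:ℝ)+1)^2 * π^2)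
        = 1 - κ * s^2 / (((j:ℝ)+1)^2 * π^2) := by field_simp
    linarith [this ▸ h]
  have hf1 : ∀ j : ℕ, (0:ℝ) < 1 - κ * 1^2 / (((j:ℝ)+1)^2 * π^2) := fun j => by
    have h := div_pos (hP j) (hcpos j)
    have : (((j:ℝ)+1)^2 * π^2 - κ) / (((j:ℝ)+1)^2 * π^2)
        = 1 - κ * 1^2 / (((j:ℝ)+1)^2 * π^2) := by field_simp
    linarith [this ▸ h]
  have hsK1 : 0 < sK κ 1 := sK_pos hκ one_pos le_rfl
  have hdiv := (tendsto_P κ s).div (tendsto_P κ 1) hsK1.ne'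
  rw [show sK κ s / sK κ 1 = sigmaR κ s from (sigmaR_eq hκ).symm] at hdiv
  have hσ : 0 < sigmaR κ s := sigmaR_pos hκ hs0 hs1
  have hlog := ((Real.continuousAt_log hσ.ne').tendsto.comp hdiv)
  apply hlog.congr
  intro n
  simp only [Function.comp_apply, Pi.div_apply]
  have hprod_s : (0:ℝ) < ∏ j ∈ Finset.range n, (1 - κ * s^2 / (((j:ℝ)+1)^2 * π^2)) :=
    Finset.prod_pos fun j _ => hfs j
  have hprod_1 : (0:ℝ) < ∏ j ∈ Finset.range n, (1 - κ * 1^2 / (((j:ℝ)+1)^2 * π^2)) :=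
    Finset.prod_pos fun j _ => hf1 j
  rw [Real.log_div (by positivity) (by positivity), Real.log_mul hs0.ne' hprod_s.ne',
    Real.log_mul one_ne_zero hprod_1.ne', Real.log_one,
    Real.log_prod (fun j _ => (hfs j).ne'), Real.log_prod (fun j _ => (hf1 j).ne')]
  have hterm : ∑ j ∈ Finset.range n,
      (Real.log (((j:ℝ)+1)^2 * π^2 - κ * s^2) - Real.log (((j:ℝ)+1)^2 * π^2 - κ))
      = ∑ j ∈ Finset.range n, (Real.log (1 - κ * s^2 / (((j:ℝ)+1)^2 * π^2))
          - Real.log (1 - κ * 1^2 / (((j:ℝ)+1)^2 * π^2))) := by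
    refine Finset.sum_congr rfl fun j _ => ?_
    rw [show 1 - κ * s^2 / (((j:ℝ)+1)^2 * π^2)
        = (((j:ℝ)+1)^2 * π^2 - κ * s^2) / (((j:ℝ)+1)^2 * π^2) from by field_simp,
      show 1 - κ * 1^2 / (((j:ℝ)+1)^2 * π^2)
        = (((j:ℝ)+1)^2 * π^2 - κ) / (((j:ℝ)+1)^2 * π^2) from by field_simp,
      Real.log_div (hQ j).ne' (hcpos j).ne', Real.log_div (hP j).ne' (hcpos j).ne']
    ring
  rw [hterm, Finset.sum_sub_distrib]
  ring

set_option maxHeartbeats 1000000 in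
lemma logSigma_convexOn {s : ℝ} (hs0 : 0 < s) (hs1 : s ≤ 1) :
    ConvexOn ℝ (Iio (π^2)) (fun κ => Real.log (sigmaR κ s)) := by
  have hsum : ∀ n : ℕ, ConvexOn ℝ (Iio (π^2)) (fun κ => ∑ j ∈ Finset.range n,
      (Real.log (((j:ℝ)+1)^2 * π^2 - κ * s^2) - Real.log (((j:ℝ)+1)^2 * π^2 - κ))) := by
    intro n
    induction n with
    | zero => simpa using convexOn_const 0 (convex_Iio (π^2))
    | succ n ih =>
      simp_rw [Finset.sum_range_succ]
      exact ih.add (phi_convexOn hs0 hs1 (c_ge n))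
  exact convexOn_of_tendsto (convex_Iio _)
    (f := fun n κ => Real.log s + ∑ j ∈ Finset.range n,
      (Real.log (((j:ℝ)+1)^2 * π^2 - κ * s^2) - Real.log (((j:ℝ)+1)^2 * π^2 - κ)))
    (fun n => (convexOn_const _ (convex_Iio _)).add (hsum n))
    (fun κ hκ => tendsto_logsum hκ hs0 hs1)

end Aux

/-- **Lemma (convexity of `G_t`).**
For every fixed `t ∈ [0,1]` the function
`G_t(x,y,κ) = log (σ_κ^{(1-t)}(1) e^x + σ_κ^{(t)}(1) e^y)`
is jointly convex on `ℝ × ℝ × (-∞, π²)`. -/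
theorem Gt_convex (t : ℝ) (ht : t ∈ Set.Icc (0:ℝ) 1) :
    ConvexOn ℝ {p : ℝ × ℝ × ℝ | p.2.2 < Real.pi ^ 2}
      (fun p : ℝ × ℝ × ℝ =>
        Real.log (sigmaR p.2.2 (1 - t) * Real.exp p.1 +
          sigmaR p.2.2 t * Real.exp p.2.1)) := by
  obtain ⟨ht0, ht1⟩ := ht
  set S : Set (ℝ × ℝ × ℝ) := {p : ℝ × ℝ × ℝ | p.2.2 < Real.pi ^ 2} with hSdef
  have hSconv : Convex ℝ S := by
    intro x hx y hy a b ha hb hab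
    exact convex_Iio (Real.pi ^ 2) hx hy ha hb hab
  have hfst : ConvexOn ℝ S (fun p : ℝ × ℝ × ℝ => p.1) :=
    ⟨hSconv, fun x _ y _ a b _ _ _ => le_of_eq rfl⟩
  have hsnd : ConvexOn ℝ S (fun p : ℝ × ℝ × ℝ => p.2.1) :=
    ⟨hSconv, fun x _ y _ a b _ _ _ => le_of_eq rfl⟩
  rcases eq_or_lt_of_le ht0 with h0 | h0
  · -- t = 0
    apply convexOn_congr hfst
    intro p hp
    rw [← h0]
    simp only [sub_zero]
    rw [sigmaR_one hp, sigmaR_zero hp]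
    simp [Real.log_exp]
  rcases eq_or_lt_of_le ht1 with h1 | h1
  · -- t = 1
    apply convexOn_congr hsnd
    intro p hp
    rw [h1]
    simp only [sub_self]
    rw [sigmaR_one hp, sigmaR_zero hp]
    simp [Real.log_exp]
  -- 0 < t < 1
  have hF1 : ConvexOn ℝ (Set.Iio (Real.pi^2)) (fun κ => Real.log (sigmaR κ (1-t))) :=
    logSigma_convexOn (by linarith) (by linarith)
  have hF2 : ConvexOn ℝ (Set.Iio (Real.pi^2)) (fun κ => Real.log (sigmaR κ t)) :=
    logSigma_convexOn h0 ht1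
  have hF1' : ConvexOn ℝ S (fun p : ℝ × ℝ × ℝ => Real.log (sigmaR p.2.2 (1-t))) :=
    ⟨hSconv, fun x hx y hy a b ha hb hab => hF1.2 hx hy ha hb hab⟩
  have hF2' : ConvexOn ℝ S (fun p : ℝ × ℝ × ℝ => Real.log (sigmaR p.2.2 t)) :=
    ⟨hSconv, fun x hx y hy a b ha hb hab => hF2.2 hx hy ha hb hab⟩
  have hA : ConvexOn ℝ S (fun p : ℝ × ℝ × ℝ => p.1 + Real.log (sigmaR p.2.2 (1-t))) :=
    hfst.add hF1'
  have hB : ConvexOn ℝ S (fun p : ℝ × ℝ × ℝ => p.2.1 + Real.log (sigmaR p.2.2 t)) :=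
    hsnd.add hF2'
  apply convexOn_congr (lse_convexOn hA hB)
  intro p hp
  have hp' : p.2.2 < Real.pi ^ 2 := hp
  have h1pos : 0 < sigmaR p.2.2 (1-t) := sigmaR_pos hp' (by linarith) (by linarith)
  have h2pos : 0 < sigmaR p.2.2 t := sigmaR_pos hp' h0 ht1
  rw [Real.exp_add, Real.exp_add, Real.exp_log h1pos, Real.exp_log h2pos]
  ring_nf
end
end
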